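/- arXiv:cond-mat/0405321 — 3 statements merged into one kernel-verified Lean document; each statement's English description precedes it below -/
import Mathlib

section
/- For real numbers t_1, ..., t_N and a parameter t, the following polynomial identity holds: ∑_{m=1}^N (-1)^{m-1} · ∏_{1≤j<k≤N, j≠m, k≠m} (t_k - t_j) · (t - t_m)^{N-1} = ∏_{1≤j<k≤N} (t_k - t_j). -/
open Finset

section VandermondeAux

open Matrix

private lemma vdm_prod_pairs {K : ℕ} (f : Fin K → Fin K → ℝ) (P : Fin K × Fin K → Prop)
    [DecidablePred P] :
    ∏ p ∈ univ.filter P, f p.1 p.2 = ∏ i, ∏ j ∈ univ.filter (fun j => P (i,j)), f i j := by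
  rw [prod_filter, Fintype.prod_prod_type (fun p : Fin K × Fin K => if P p then f p.1 p.2 else 1)]
  simp [prod_filter]

private lemma vdm_pairs_eq_det {K : ℕ} (v : Fin K → ℝ) :
    ∏ p ∈ univ.filter (fun p : Fin K × Fin K => p.1 < p.2), (v p.2 - v p.1)
      = (vandermonde v).det := by
  rw [Matrix.det_vandermonde, vdm_prod_pairs (fun i j => v j - v i)]
  refine Finset.prod_congr rfl fun i _ => Finset.prod_congr ?_ fun _ _ => rfl
  ext j; simp

private lemma vdm_restricted_prod {n : ℕ} (t : Fin (n+1) → ℝ) (m : Fin (n+1)) :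
    ∏ p ∈ univ.filter (fun p : Fin (n+1) × Fin (n+1) => p.1 < p.2 ∧ p.1 ≠ m ∧ p.2 ≠ m),
        (t p.2 - t p.1)
      = (vandermonde (t ∘ m.succAbove)).det := by
  rw [← vdm_pairs_eq_det]
  symm
  refine Finset.prod_bij (fun p _ => (m.succAbove p.1, m.succAbove p.2)) ?_ ?_ ?_ ?_
  · intro p hp
    simp only [mem_filter, mem_univ, true_and] at hp ⊢
    exact ⟨Fin.succAbove_lt_succAbove_iff.2 hp, Fin.succAbove_ne m p.1, Fin.succAbove_ne m p.2⟩
  · intro p _ q _ h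
    simp only [Prod.mk.injEq] at h
    exact Prod.ext (m.succAbove_right_injective h.1) (m.succAbove_right_injective h.2)
  · intro p hp
    simp only [mem_filter, mem_univ, true_and] at hp
    obtain ⟨h1, h2, h3⟩ := hp
    obtain ⟨a, ha⟩ := Fin.exists_succAbove_eq h2
    obtain ⟨b, hb⟩ := Fin.exists_succAbove_eq h3
    refine ⟨(a, b), ?_, ?_⟩
    · simp only [mem_filter, mem_univ, true_and]
      rw [← Fin.succAbove_lt_succAbove_iff (p := m), ha, hb]; exact h1
    · simp [ha, hb]
  · intro p _; simp

private lemma vdm_detM_eq_vdm (n : ℕ) (t : Fin (n+1) → ℝ) (s : ℝ) :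
    (Matrix.of fun i j => if (j:ℕ) = n then (t i - s)^n else t i ^ (j:ℕ) :
      Matrix (Fin (n+1)) (Fin (n+1)) ℝ).det = (vandermonde t).det := by
  set U : Matrix (Fin (n+1)) (Fin (n+1)) ℝ :=
    fun j k => if (k:ℕ) = n then (n.choose j) * (-s)^(n - (j:ℕ)) else if j = k then 1 else 0
    with hUdef
  have hMU : (Matrix.of fun i j => if (j:ℕ) = n then (t i - s)^n else t i ^ (j:ℕ) :
      Matrix (Fin (n+1)) (Fin (n+1)) ℝ) = vandermonde t * U := by
    ext i k
    rw [Matrix.mul_apply]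
    simp only [Matrix.mul_apply, Matrix.vandermonde_apply, hUdef, Matrix.of_apply]
    by_cases hk : (k:ℕ) = n
    · simp only [hk, if_true]
      rw [sub_eq_add_neg, add_pow,
        ← Fin.sum_univ_eq_sum_range (fun j => t i ^ j * (-s) ^ (n - j) * n.choose j) (n+1)]
      exact Finset.sum_congr rfl fun j _ => by ring
    · simp [hk, mul_ite]
  have hUtri : U.BlockTriangular id := by
    intro i j h
    have hji : (j:ℕ) < (i:ℕ) := h
    have hjn : (j:ℕ) ≠ n := by omega
    have hij : i ≠ j := by exact fun e => absurd e.symm (Fin.ne_of_lt h)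
    simp [hUdef, hjn, hij]
  have hU : U.det = 1 := by
    rw [Matrix.det_of_upperTriangular hUtri]
    refine Finset.prod_eq_one fun j _ => ?_
    by_cases hj : (j:ℕ) = n
    · simp [hUdef, hj, Nat.choose_self]
    · simp [hUdef, hj]
  rw [hMU, Matrix.det_mul, hU, mul_one]

private lemma vdm_detM_expand (n : ℕ) (t : Fin (n+1) → ℝ) (s : ℝ) :
    (Matrix.of fun i j => if (j:ℕ) = n then (t i - s)^n else t i ^ (j:ℕ) :
      Matrix (Fin (n+1)) (Fin (n+1)) ℝ).det
    = ∑ i : Fin (n+1), (-1:ℝ)^(i:ℕ) * (vandermonde (t ∘ i.succAbove)).det * (s - t i)^n := by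
  rw [Matrix.det_succ_column _ (Fin.last n)]
  refine Finset.sum_congr rfl fun i _ => ?_
  have h1 : ((Matrix.of fun i j => if (j:ℕ) = n then (t i - s)^n else t i ^ (j:ℕ) :
      Matrix (Fin (n+1)) (Fin (n+1)) ℝ).submatrix i.succAbove (Fin.last n).succAbove)
      = vandermonde (t ∘ i.succAbove) := by
    rw [Fin.succAbove_last]
    ext a b
    have hb : (b:ℕ) ≠ n := Nat.ne_of_lt b.isLt
    simp [Matrix.vandermonde, Fin.coe_castSucc, hb]
  rw [h1]
  simp only [Fin.val_last, Matrix.of_apply, if_pos rfl, if_true]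
  have h3 : (-1:ℝ)^((i:ℕ) + n) * (t i - s)^n = (-1:ℝ)^(i:ℕ) * (s - t i)^n := by
    have key : ((-1:ℝ) * (t i - s)) = s - t i := by ring
    calc (-1:ℝ)^((i:ℕ)+n) * (t i - s)^n
        = (-1:ℝ)^(i:ℕ) * (((-1:ℝ)*(t i - s))^n) := by rw [mul_pow, pow_add]; ring
      _ = (-1:ℝ)^(i:ℕ) * (s - t i)^n := by rw [key]
  linear_combination (vandermonde (t ∘ i.succAbove)).det * h3

end VandermondeAux

/-- For real numbers `t 0, …, t (N-1)` (representing `t_1, …, t_N`) and a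
parameter `s`, one has
`∑_{m} (-1)^m ∏_{j<k, j≠m, k≠m} (t k - t j) (s - t m)^{N-1} = ∏_{j<k} (t k - t j)`. -/
theorem vandermonde_expansion_identity (N : ℕ) (hN : 1 ≤ N) (t : Fin N → ℝ) (s : ℝ) :
    ∑ m : Fin N, (-1 : ℝ) ^ (m : ℕ) *
      (∏ p ∈ Finset.univ.filter
          (fun p : Fin N × Fin N => p.1 < p.2 ∧ p.1 ≠ m ∧ p.2 ≠ m),
        (t p.2 - t p.1)) * (s - t m) ^ (N - 1)
    = ∏ p ∈ Finset.univ.filter (fun p : Fin N × Fin N => p.1 < p.2), (t p.2 - t p.1) := by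
  obtain ⟨n, rfl⟩ : ∃ n, N = n + 1 := ⟨N - 1, by omega⟩
  simp only [Nat.add_sub_cancel]
  calc ∑ m : Fin (n+1), (-1 : ℝ) ^ (m : ℕ) *
      (∏ p ∈ Finset.univ.filter
          (fun p : Fin (n+1) × Fin (n+1) => p.1 < p.2 ∧ p.1 ≠ m ∧ p.2 ≠ m),
        (t p.2 - t p.1)) * (s - t m) ^ n
      = ∑ m : Fin (n+1), (-1:ℝ)^(m:ℕ) *
          (Matrix.vandermonde (t ∘ m.succAbove)).det * (s - t m)^n := by
        refine Finset.sum_congr rfl fun m _ => ?_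
        rw [vdm_restricted_prod]
    _ = (Matrix.of fun i j => if (j:ℕ) = n then (t i - s)^n else t i ^ (j:ℕ) :
          Matrix (Fin (n+1)) (Fin (n+1)) ℝ).det := (vdm_detM_expand n t s).symm
    _ = (Matrix.vandermonde t).det := vdm_detM_eq_vdm n t s
    _ = ∏ p ∈ Finset.univ.filter
          (fun p : Fin (n+1) × Fin (n+1) => p.1 < p.2), (t p.2 - t p.1) :=
        (vdm_pairs_eq_det t).symm
end

section
/- Define F_n(m; t) = e^{-t} (t^m / m!) ∑_{k=0}^∞ [(n)_k / (m+1)_k] (t^k / k!), where (a)_k = a(a+1)⋯(a+k-1) is the Pochhammer symbol. Then for all integers n, m with m ≥ 0 and all t ≥ 0, ∫_0^t F_n(m; s) ds = F_{n+1}(m+1; t) − F_{n+1}(m+1; 0). -/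
open MeasureTheory

/-- The Pochhammer symbol `(a)_k = a (a+1) ⋯ (a+k-1)`. -/
noncomputable def poch (a : ℝ) (k : ℕ) : ℝ := ∏ i ∈ Finset.range k, (a + i)

/-- Schütz's function `F_n(m;t) = e^{-t} (t^m/m!) ∑_{k≥0} [(n)_k/(m+1)_k] t^k/k!`. -/
noncomputable def schuetzF (n : ℤ) (m : ℕ) (t : ℝ) : ℝ :=
  Real.exp (-t) * t ^ m / (m.factorial : ℝ) *
    ∑' k : ℕ, poch (n : ℝ) k / poch ((m : ℝ) + 1) k * t ^ k / (k.factorial : ℝ)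

noncomputable def gfun (j : ℕ) (s : ℝ) : ℝ := Real.exp (-s) * s ^ j / j.factorial

lemma gfun_continuous (j : ℕ) : Continuous (gfun j) :=
  ((Real.continuous_exp.comp continuous_neg).mul (continuous_pow j)).div_const _

lemma poch_zero (a : ℝ) : poch a 0 = 1 := by simp [poch]

lemma poch_succ (a : ℝ) (k : ℕ) : poch a (k + 1) = poch a k * (a + k) :=
  Finset.prod_range_succ _ _

lemma poch_succ' (a : ℝ) (k : ℕ) : poch a (k + 1) = a * poch (a + 1) k := by
  rw [poch, Finset.prod_range_succ']
  simp only [Nat.cast_zero, add_zero, mul_comm]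
  congr 1
  refine Finset.prod_congr rfl fun i _ => ?_
  push_cast; ring

lemma poch_pos {a : ℝ} (ha : 0 < a) (k : ℕ) : 0 < poch a k :=
  Finset.prod_pos fun i _ => by positivity

lemma fact_poch (m k : ℕ) :
    ((m + k).factorial : ℝ) = (m.factorial : ℝ) * poch ((m : ℝ) + 1) k := by
  induction k with
  | zero => simp [poch_zero]
  | succ k ih =>
      rw [show m + (k+1) = (m+k) + 1 by ring, Nat.factorial_succ, poch_succ]
      push_cast [ih]; ring

lemma coeff_rec (a : ℝ) (k : ℕ) :
    poch a (k + 1) / ((k+1).factorial : ℝ)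
      = poch (a+1) (k+1) / ((k+1).factorial : ℝ) - poch (a+1) k / (k.factorial : ℝ) := by
  have hk : (k.factorial : ℝ) ≠ 0 := Nat.cast_ne_zero.2 k.factorial_ne_zero
  rw [poch_succ', poch_succ, Nat.factorial_succ]
  push_cast
  field_simp
  ring

lemma hasDerivAt_gfun (j : ℕ) (s : ℝ) :
    HasDerivAt (gfun (j+1)) (gfun j s - gfun (j+1) s) s := by
  have h1 : HasDerivAt (fun x : ℝ => Real.exp (-x)) (Real.exp (-s) * (-1)) s :=
    (hasDerivAt_neg s).exp
  have h2 : HasDerivAt (fun x : ℝ => x ^ (j+1)) ((j+1 : ℕ) * s ^ j) s := hasDerivAt_pow _ _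
  have := (h1.mul h2).div_const ((j+1).factorial : ℝ)
  refine this.congr_deriv ?_
  have hj : (j.factorial : ℝ) ≠ 0 := Nat.cast_ne_zero.2 j.factorial_ne_zero
  simp only [gfun, Nat.factorial_succ]
  push_cast
  field_simp
  ring

lemma summable_aux (a : ℝ) (m : ℕ) (s : ℝ) :
    Summable fun k : ℕ => poch a k / (k.factorial : ℝ) * gfun (m + k) s := by
  set f : ℕ → ℝ := fun k => poch a k / (k.factorial : ℝ) * gfun (m + k) s with hf
  have key : ∀ k : ℕ, f (k+1) = f k * ((a + k) * s / (((k:ℝ)+1) * ((m:ℝ)+k+1))) := by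
    intro k
    have hk : (k.factorial : ℝ) ≠ 0 := Nat.cast_ne_zero.2 k.factorial_ne_zero
    have hmk : ((m+k).factorial : ℝ) ≠ 0 := Nat.cast_ne_zero.2 (m+k).factorial_ne_zero
    have hk1 : ((k:ℝ) + 1) ≠ 0 := by positivity
    have hmk1 : ((m:ℝ) + k + 1) ≠ 0 := by positivity
    simp only [hf, gfun, show m + (k+1) = (m+k) + 1 by ring, poch_succ,
      Nat.factorial_succ, pow_succ]
    push_cast
    field_simp
  apply summable_of_ratio_norm_eventually_le (r := 1/2) (by norm_num)
  have hK : ∀ᶠ k : ℕ in Filter.atTop, 2 * (|a| + 1) * |s| ≤ (k : ℝ) := by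
    obtain ⟨K, hK⟩ := exists_nat_ge (2 * (|a| + 1) * |s|)
    filter_upwards [Filter.eventually_ge_atTop K] with k hk
    exact hK.trans (by exact_mod_cast hk)
  filter_upwards [hK] with k hk
  rw [key k, norm_mul, mul_comm (1/2 : ℝ)]
  have hq : ‖(a + (k:ℝ)) * s / (((k:ℝ)+1) * ((m:ℝ)+k+1))‖ ≤ 1/2 := by
    rw [Real.norm_eq_abs, abs_div, abs_mul]
    have h1 : |a + (k:ℝ)| ≤ (|a| + 1) * ((k:ℝ) + 1) := by
      have := abs_add_le a (k:ℝ)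
      have h2 : |(k:ℝ)| = k := abs_of_nonneg (by positivity)
      nlinarith [abs_nonneg a, (Nat.cast_nonneg k : (0:ℝ) ≤ k)]
    have hden : |((k:ℝ)+1) * ((m:ℝ)+k+1)| = ((k:ℝ)+1) * ((m:ℝ)+k+1) := by
      apply abs_of_pos; positivity
    rw [hden, div_le_iff₀ (by positivity)]
    have h3 : (|a| + 1) * |s| * 2 ≤ (k:ℝ) + 1 := by nlinarith [abs_nonneg s]
    have h4 : ((k:ℝ)+1) ≤ ((m:ℝ)+k+1) := by
      have : (0:ℝ) ≤ m := Nat.cast_nonneg m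
      linarith
    calc |a + (k:ℝ)| * |s| ≤ ((|a| + 1) * ((k:ℝ)+1)) * |s| :=
          mul_le_mul_of_nonneg_right h1 (abs_nonneg s)
      _ = ((|a|+1) * |s|) * ((k:ℝ)+1) := by ring
      _ ≤ (((k:ℝ)+1)/2) * (((m:ℝ)+k+1)) := by nlinarith [abs_nonneg s, abs_nonneg a]
      _ = 1/2 * (((k:ℝ)+1) * ((m:ℝ)+k+1)) := by ring
  exact mul_le_mul_of_nonneg_left hq (norm_nonneg _)

lemma schuetz_repr (n : ℤ) (m : ℕ) (s : ℝ) :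
    schuetzF n m s = ∑' k : ℕ, poch (n : ℝ) k / (k.factorial : ℝ) * gfun (m + k) s := by
  rw [schuetzF, ← tsum_mul_left]
  refine tsum_congr fun k => ?_
  have hp : poch ((m : ℝ) + 1) k ≠ 0 := ne_of_gt (poch_pos (by positivity) k)
  have hm : (m.factorial : ℝ) ≠ 0 := Nat.cast_ne_zero.2 m.factorial_ne_zero
  have hk : (k.factorial : ℝ) ≠ 0 := Nat.cast_ne_zero.2 k.factorial_ne_zero
  rw [gfun, fact_poch, pow_add]
  field_simp

lemma sum_identity (a : ℝ) (m : ℕ) (s : ℝ) :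
    ∑' k : ℕ, poch a k / (k.factorial : ℝ) * gfun (m + k) s
      = ∑' k : ℕ, poch (a+1) k / (k.factorial : ℝ) * (gfun (m + k) s - gfun (m + 1 + k) s) := by
  have S1 : Summable fun k : ℕ => poch (a+1) k / (k.factorial : ℝ) * gfun (m + k) s :=
    summable_aux _ _ _
  have S2 : Summable fun k : ℕ => poch (a+1) k / (k.factorial : ℝ) * gfun (m + 1 + k) s :=
    summable_aux (a+1) (m+1) s
  simp only [mul_sub]
  rw [Summable.tsum_sub S1 S2, Summable.tsum_eq_zero_add S1, Summable.tsum_eq_zero_add (summable_aux a m s)]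
  simp only [poch_zero, Nat.factorial_zero, Nat.cast_one]
  have hsh : ∀ k : ℕ, m + (k + 1) = m + 1 + k := fun k => by omega
  have : (∑' k : ℕ, poch a (k+1) / ((k+1).factorial : ℝ) * gfun (m + (k+1)) s)
        + ∑' k : ℕ, poch (a+1) k / (k.factorial : ℝ) * gfun (m + 1 + k) s
      = ∑' k : ℕ, poch (a+1) (k+1) / ((k+1).factorial : ℝ) * gfun (m + (k+1)) s := by
    rw [← Summable.tsum_add ((summable_nat_add_iff 1).2 (summable_aux a m s)) S2]
    refine tsum_congr fun k => ?_
    rw [hsh k, coeff_rec]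
    ring
  linarith [this]

lemma gfun_nonneg (j : ℕ) {s : ℝ} (hs : 0 ≤ s) : 0 ≤ gfun j s := by
  unfold gfun; positivity

lemma gfun_bound (j : ℕ) {s t : ℝ} (hs : 0 ≤ s) (hst : s ≤ t) :
    gfun j s ≤ Real.exp t * gfun j t := by
  have hrhs : Real.exp t * gfun j t = t ^ j / (j.factorial : ℝ) := by
    rw [gfun, ← mul_div_assoc, ← mul_assoc, ← Real.exp_add, add_neg_cancel,
      Real.exp_zero, one_mul]
  rw [hrhs, gfun]
  have h1 : Real.exp (-s) ≤ 1 := Real.exp_le_one_iff.2 (by linarith)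
  have h2 : s ^ j ≤ t ^ j := pow_le_pow_left₀ hs hst j
  have h3 : Real.exp (-s) * s ^ j ≤ 1 * t ^ j :=
    mul_le_mul h1 h2 (pow_nonneg hs j) zero_le_one
  have hj : (0:ℝ) < (j.factorial : ℝ) := by
    exact_mod_cast j.factorial_pos
  rw [one_mul] at h3
  exact div_le_div_of_nonneg_right h3 hj.le |>.trans_eq rfl

/-- `∫_0^t F_n(m;s) ds = F_{n+1}(m+1;t) − F_{n+1}(m+1;0)`. -/
theorem integral_schuetzF (n : ℤ) (m : ℕ) (t : ℝ) (ht : 0 ≤ t) :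
    ∫ s in (0:ℝ)..t, schuetzF n m s
      = schuetzF (n + 1) (m + 1) t - schuetzF (n + 1) (m + 1) 0 := by
  have hcast : ((n + 1 : ℤ) : ℝ) = (n : ℝ) + 1 := by push_cast; ring
  have h0 : schuetzF (n + 1) (m + 1) 0 = 0 := by
    simp [schuetzF, zero_pow (by omega : m + 1 ≠ 0)]
  have hrepr : ∀ s : ℝ, schuetzF n m s
      = ∑' k : ℕ, poch ((n:ℝ)+1) k / (k.factorial : ℝ)
          * (gfun (m + k) s - gfun (m + 1 + k) s) :=
    fun s => (schuetz_repr n m s).trans (sum_identity (n : ℝ) m s)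
  have hR : schuetzF (n + 1) (m + 1) t
      = ∑' k : ℕ, poch ((n:ℝ)+1) k / (k.factorial : ℝ) * gfun (m + 1 + k) t := by
    rw [schuetz_repr (n+1) (m+1) t, hcast]
  have hint : ∀ k : ℕ, IntegrableOn
      (fun s => poch ((n:ℝ)+1) k / (k.factorial : ℝ)
          * (gfun (m + k) s - gfun (m + 1 + k) s)) (Set.Ioc 0 t) volume := by
    intro k
    exact ((continuous_const.mul ((gfun_continuous (m+k)).sub
      (gfun_continuous (m+1+k)))).integrableOn_Ioc)
  have hsum : Summable fun k : ℕ => ∫ s in Set.Ioc 0 t,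
      ‖poch ((n:ℝ)+1) k / (k.factorial : ℝ)
          * (gfun (m + k) s - gfun (m + 1 + k) s)‖ := by
    set B : ℕ → ℝ := fun k =>
      Real.exp t * (|poch ((n:ℝ)+1) k / (k.factorial : ℝ) * gfun (m + k) t|
        + |poch ((n:ℝ)+1) k / (k.factorial : ℝ) * gfun (m + 1 + k) t|) with hB
    have hBsum : Summable fun k => t * B k := by
      refine Summable.mul_left t ?_
      exact (((summable_aux ((n:ℝ)+1) m t).abs.add
        ((summable_aux ((n:ℝ)+1) (m+1) t).abs)).mul_left (Real.exp t))
    refine Summable.of_nonneg_of_le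
      (fun k => integral_nonneg fun s => norm_nonneg _) (fun k => ?_) hBsum
    have hle : ∀ s ∈ Set.Ioc (0:ℝ) t,
        ‖poch ((n:ℝ)+1) k / (k.factorial : ℝ)
          * (gfun (m + k) s - gfun (m + 1 + k) s)‖ ≤ B k := by
      intro s hs
      have hs0 : (0:ℝ) ≤ s := hs.1.le
      have hst : s ≤ t := hs.2
      have g1 := gfun_bound (m+k) hs0 hst
      have g2 := gfun_bound (m+1+k) hs0 hst
      have g1n := gfun_nonneg (m+k) hs0
      have g2n := gfun_nonneg (m+1+k) hs0
      have g1tn := gfun_nonneg (m+k) ht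
      have g2tn := gfun_nonneg (m+1+k) ht
      rw [norm_mul, Real.norm_eq_abs, Real.norm_eq_abs, hB]
      simp only [abs_mul, abs_of_nonneg g1tn, abs_of_nonneg g2tn]
      have habs : |gfun (m+k) s - gfun (m+1+k) s|
          ≤ Real.exp t * gfun (m+k) t + Real.exp t * gfun (m+1+k) t := by
        rw [abs_sub_le_iff]
        constructor <;> nlinarith [Real.exp_pos t]
      calc |poch ((n:ℝ)+1) k / (k.factorial : ℝ)| * |gfun (m+k) s - gfun (m+1+k) s|
          ≤ |poch ((n:ℝ)+1) k / (k.factorial : ℝ)|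
            * (Real.exp t * gfun (m+k) t + Real.exp t * gfun (m+1+k) t) :=
            mul_le_mul_of_nonneg_left habs (abs_nonneg _)
        _ = Real.exp t * (|poch ((n:ℝ)+1) k / (k.factorial : ℝ)| * gfun (m+k) t
            + |poch ((n:ℝ)+1) k / (k.factorial : ℝ)| * gfun (m+1+k) t) := by ring
    calc (∫ s in Set.Ioc 0 t, ‖poch ((n:ℝ)+1) k / (k.factorial : ℝ)
          * (gfun (m + k) s - gfun (m + 1 + k) s)‖)
        ≤ ∫ _ in Set.Ioc 0 t, B k := by
          refine setIntegral_mono_on (hint k).norm ?_ measurableSet_Ioc hle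
          exact integrableOn_const measure_Ioc_lt_top.ne
      _ = t * B k := by
          rw [setIntegral_const, Real.volume_real_Ioc_of_le ht, smul_eq_mul, sub_zero]
  have hterm : ∀ k : ℕ, (∫ s in Set.Ioc 0 t, poch ((n:ℝ)+1) k / (k.factorial : ℝ)
        * (gfun (m + k) s - gfun (m + 1 + k) s))
      = poch ((n:ℝ)+1) k / (k.factorial : ℝ) * gfun (m + 1 + k) t := by
    intro k
    rw [← intervalIntegral.integral_of_le ht, intervalIntegral.integral_const_mul]
    have hderiv : ∀ s : ℝ, HasDerivAt (gfun (m+1+k))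
        (gfun (m+k) s - gfun (m+1+k) s) s := by
      intro s
      have := hasDerivAt_gfun (m+k) s
      rwa [show (m+k)+1 = m+1+k by omega] at this
    have hft : (∫ s in (0:ℝ)..t, (gfun (m+k) s - gfun (m+1+k) s))
        = gfun (m+1+k) t - gfun (m+1+k) 0 :=
      intervalIntegral.integral_eq_sub_of_hasDerivAt (fun s _ => hderiv s)
        (((gfun_continuous (m+k)).sub (gfun_continuous (m+1+k))).intervalIntegrable 0 t)
    rw [hft, show gfun (m+1+k) 0 = 0 from by
      simp [gfun, zero_pow (by omega : m+1+k ≠ 0)], sub_zero]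
  rw [h0, sub_zero, hR, intervalIntegral.integral_of_le ht]
  simp only [hrepr]
  rw [← MeasureTheory.integral_tsum_of_summable_integral_norm hint hsum]
  exact tsum_congr hterm
end

section
/- For the choice c_j(t) = t^j (j ≤ N-1), d_j(t) = t^j (j ≤ N-2), d_{N-1}(t) = t^K, w(t) = t^α e^{-t} with α = M − K − 1 and K = N + Y − 1 ≥ N − 1, the biorthogonal partner D_{N-1} is given by D_{N-1}(t) = Γ(M) ∑_{j=N-1}^K [(-K)_j / Γ(M − K + j)] L_j^{(α)}(t), and the pairing constant is h_{N-1} = ⟨C_{N-1}, D_{N-1}⟩ = (-1)^{N-1} Γ(M) (-K)_{N-1}. -/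
open MeasureTheory

/-- The generalized Laguerre function, defined via the Rodrigues formula
`L_j^{(α)}(x) = (x^{-α} e^x / j!) dⁿ/dxⁿ [e^{-x} x^{j+α}]` (valid for `x > 0`). -/
noncomputable def laguerre (α : ℝ) (j : ℕ) (x : ℝ) : ℝ :=
  x ^ (-α) * Real.exp x / (j.factorial : ℝ) *
    iteratedDeriv j (fun y : ℝ => Real.exp (-y) * y ^ ((j : ℝ) + α)) x

namespace BioD

open Finset Polynomial

noncomputable def cfn (n m i : ℕ) : ℝ := (-1) ^ (m + i) * (m.choose i) * (n.descFactorial i)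

noncomputable def lagCoeff (b j k : ℕ) : ℝ :=
  (-1) ^ k * (j.choose k) * ((j + b).descFactorial (j - k)) / (j.factorial)

noncomputable def eC (b Kn j : ℕ) : ℝ :=
  (-1) ^ j * ((Kn + b).factorial : ℝ) * (Kn.descFactorial j : ℝ) / ((b + j).factorial : ℝ)

lemma cfn_succ (n m i : ℕ) : cfn n m i * ((n - i : ℕ) : ℝ) = cfn n (m + 1) (i + 1) + cfn n m (i + 1) := by
  unfold cfn
  have h1 : m + 1 + (i + 1) = (m + i) + 2 := by ring
  have h2 : m + (i + 1) = (m + i) + 1 := by ring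
  rw [h1, h2, Nat.descFactorial_succ, Nat.choose_succ_succ]
  push_cast
  ring

lemma cfn_zero' (n m : ℕ) : cfn n (m + 1) 0 = -cfn n m 0 := by
  unfold cfn
  simp [pow_succ]

lemma cfn_top (n m : ℕ) : cfn n m (m + 1) = 0 := by
  unfold cfn
  simp [Nat.choose_succ_self]

lemma iterderiv (n m : ℕ) (x : ℝ) :
    iteratedDeriv m (fun y : ℝ => Real.exp (-y) * y ^ n) x
      = Real.exp (-x) * ∑ i ∈ range (m + 1), cfn n m i * x ^ (n - i) := by
  induction m generalizing x with
  | zero => simp [cfn]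
  | succ m ih =>
    rw [iteratedDeriv_succ]
    have hfun : iteratedDeriv m (fun y : ℝ => Real.exp (-y) * y ^ n)
        = fun x => Real.exp (-x) * ∑ i ∈ range (m + 1), cfn n m i * x ^ (n - i) :=
      funext ih
    rw [hfun]
    have h1 : HasDerivAt (fun x : ℝ => Real.exp (-x)) (Real.exp (-x) * (-1)) x :=
      (hasDerivAt_neg' x).exp
    have h2 : HasDerivAt (fun x : ℝ => ∑ i ∈ range (m + 1), cfn n m i * x ^ (n - i))
        (∑ i ∈ range (m + 1), cfn n m i * (((n - i : ℕ) : ℝ) * x ^ (n - i - 1))) x := by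
      refine HasDerivAt.fun_sum (fun i _ => ?_)
      exact (hasDerivAt_pow (n - i) x).const_mul _
    rw [(h1.fun_mul h2).deriv]
    have key : (-1 : ℝ) * (∑ i ∈ range (m + 1), cfn n m i * x ^ (n - i))
        + ∑ i ∈ range (m + 1), cfn n m i * (((n - i : ℕ) : ℝ) * x ^ (n - i - 1))
        = ∑ i ∈ range (m + 1 + 1), cfn n (m + 1) i * x ^ (n - i) := by
      have hterm : ∀ i : ℕ, cfn n m i * (((n - i : ℕ) : ℝ) * x ^ (n - i - 1))
          = cfn n (m + 1) (i + 1) * x ^ (n - (i + 1)) + cfn n m (i + 1) * x ^ (n - (i + 1)) := by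
        intro i
        have hx : n - i - 1 = n - (i + 1) := by omega
        rw [hx, ← mul_assoc, cfn_succ, add_mul]
      rw [Finset.sum_range_succ' (fun i => cfn n (m + 1) i * x ^ (n - i)) (m + 1)]
      simp only [hterm, Finset.sum_add_distrib]
      have h5 : ∑ i ∈ range (m + 1), cfn n m (i + 1) * x ^ (n - (i + 1))
          = (∑ i ∈ range (m + 1), cfn n m i * x ^ (n - i)) - cfn n m 0 * x ^ (n - 0) := by
        have h6 := Finset.sum_range_succ' (fun i => cfn n m i * x ^ (n - i)) (m + 1)
        rw [Finset.sum_range_succ (fun i => cfn n m i * x ^ (n - i)) (m + 1), cfn_top,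
          zero_mul, add_zero] at h6
        linarith [h6]
      rw [h5, cfn_zero']
      ring
    rw [← key]
    ring

lemma laguerre_eval (b j : ℕ) (x : ℝ) (hx : 0 < x) :
    laguerre (b : ℝ) j x = ∑ k ∈ range (j + 1), lagCoeff b j k * x ^ k := by
  have hfun : (fun y : ℝ => Real.exp (-y) * y ^ ((j : ℝ) + (b : ℝ)))
      = fun y : ℝ => Real.exp (-y) * y ^ (j + b : ℕ) := by
    funext y
    rw [show ((j : ℝ) + (b : ℝ)) = ((j + b : ℕ) : ℝ) by push_cast; ring, Real.rpow_natCast]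
  unfold laguerre
  rw [hfun, iterderiv]
  have hxb : x ^ (-(b : ℝ)) = (x ^ (b : ℕ))⁻¹ := by
    rw [Real.rpow_neg hx.le, Real.rpow_natCast]
  have hxbne : (x : ℝ) ^ (b : ℕ) ≠ 0 := pow_ne_zero _ hx.ne'
  have hfac : ((j.factorial : ℝ)) ≠ 0 := Nat.cast_ne_zero.mpr j.factorial_ne_zero
  have hstep : x ^ (-(b : ℝ)) * Real.exp x / (j.factorial : ℝ) *
        (Real.exp (-x) * ∑ i ∈ range (j + 1), cfn (j + b) j i * x ^ (j + b - i))
      = ∑ i ∈ range (j + 1),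
          (x ^ (b : ℕ))⁻¹ / (j.factorial : ℝ) * (cfn (j + b) j i * x ^ (j + b - i)) := by
    rw [← Finset.mul_sum, hxb, Real.exp_neg]
    field_simp
  rw [hstep, ← Finset.sum_range_reflect (fun k => lagCoeff b j k * x ^ k) (j + 1)]
  refine Finset.sum_congr rfl (fun i hi => ?_)
  have hij : i ≤ j := by simpa using Nat.lt_succ_iff.mp (Finset.mem_range.mp hi)
  have h1 : j + 1 - 1 - i = j - i := by omega
  have h2 : j + b - i = (j - i) + b := by omega
  have h3 : j - (j - i) = i := by omega
  rw [h1, h2]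
  unfold lagCoeff cfn
  rw [h3, Nat.choose_symm hij]
  have hsgn : ((-1 : ℝ)) ^ (j + i) = (-1) ^ (j - i) := by
    rw [show j + i = (j - i) + 2 * i by omega, pow_add, pow_mul]
    norm_num
  rw [hsgn, pow_add x]
  field_simp

lemma hasseDeriv_high (P : Polynomial ℝ) (i m : ℕ) (h : P.natDegree ≤ i) (hm : i ≤ m) :
    Polynomial.hasseDeriv m P = Polynomial.C (P.coeff m) := by
  ext n
  rw [Polynomial.hasseDeriv_coeff, Polynomial.coeff_C]
  cases n with
  | zero => simp
  | succ n =>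
    simp only [Nat.succ_ne_zero, if_false]
    have : P.coeff (n + 1 + m) = 0 :=
      Polynomial.coeff_eq_zero_of_natDegree_lt (by omega)
    simp [this]

lemma hasseDeriv_one_below (P : Polynomial ℝ) (i : ℕ) (h : P.natDegree ≤ i + 1) :
    Polynomial.hasseDeriv i P
      = Polynomial.C (P.coeff i) + Polynomial.C ((i + 1 : ℕ) * P.coeff (i + 1)) * X := by
  ext n
  rw [Polynomial.hasseDeriv_coeff]
  match n with
  | 0 => simp
  | 1 => simp [Nat.add_comm 1 i, Nat.choose_succ_self_right]
  | (n + 2) =>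
    have : P.coeff (n + 2 + i) = 0 := Polynomial.coeff_eq_zero_of_natDegree_lt (by omega)
    simp [this, Polynomial.coeff_C, Polynomial.coeff_one, Polynomial.coeff_X]

lemma FD : ∀ (i : ℕ) (P : Polynomial ℝ), P.natDegree ≤ i →
    ∑ m ∈ range (i + 1), (-1 : ℝ) ^ m * (i.choose m) * P.eval (m : ℝ)
      = (-1) ^ i * (i.factorial : ℝ) * P.coeff i := by
  intro i
  induction i with
  | zero =>
    intro P _
    simp [Polynomial.coeff_zero_eq_eval_zero]
  | succ i ih =>
    intro P h
    set Q : Polynomial ℝ := Polynomial.taylor 1 P - P with hQ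
    have hQeval : ∀ x : ℝ, Q.eval x = P.eval (x + 1) - P.eval x := by
      intro x; rw [hQ]; simp [Polynomial.taylor_eval]
    have hQcoeff : ∀ m : ℕ, i + 1 ≤ m → Q.coeff m = 0 := by
      intro m hm
      rw [hQ, Polynomial.coeff_sub, Polynomial.taylor_coeff,
        hasseDeriv_high P (i + 1) m h hm]
      simp
    have hQdeg : Q.natDegree ≤ i :=
      Polynomial.natDegree_le_iff_coeff_eq_zero.mpr (fun m hm => hQcoeff m (by omega))
    have hQi : Q.coeff i = (i + 1 : ℕ) * P.coeff (i + 1) := by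
      rw [hQ, Polynomial.coeff_sub, Polynomial.taylor_coeff, hasseDeriv_one_below P i h]
      simp
    have pas : ∀ m : ℕ, ((i + 1).choose (m + 1) : ℝ) = (i.choose m : ℝ) + (i.choose (m + 1) : ℝ) := by
      intro m; rw [Nat.choose_succ_succ]; push_cast; ring
    rw [Finset.sum_range_succ' (fun m => (-1 : ℝ) ^ m * ((i + 1).choose m) * P.eval (m : ℝ)) (i + 1)]
    have expand : ∀ m ∈ range (i + 1),
        (-1 : ℝ) ^ (m + 1) * ((i + 1).choose (m + 1)) * P.eval ((m + 1 : ℕ) : ℝ)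
          = -((-1 : ℝ) ^ m * (i.choose m) * P.eval ((m : ℝ) + 1))
            + (-1) ^ (m + 1) * (i.choose (m + 1)) * P.eval (((m + 1 : ℕ)) : ℝ) := by
      intro m _
      rw [pas]
      push_cast
      ring
    rw [Finset.sum_congr rfl expand, Finset.sum_add_distrib]
    have rebuild : ∑ m ∈ range (i + 1), (-1 : ℝ) ^ (m + 1) * (i.choose (m + 1)) * P.eval (((m + 1 : ℕ)) : ℝ)
          + (-1 : ℝ) ^ 0 * ((i + 1).choose 0) * P.eval ((0 : ℕ) : ℝ)
        = ∑ m ∈ range (i + 1), (-1 : ℝ) ^ m * (i.choose m) * P.eval (m : ℝ) := by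
      have h6 := Finset.sum_range_succ' (fun m => (-1 : ℝ) ^ m * (i.choose m) * P.eval (m : ℝ)) (i + 1)
      rw [Finset.sum_range_succ (fun m => (-1 : ℝ) ^ m * (i.choose m) * P.eval (m : ℝ)) (i + 1)] at h6
      simp only [Nat.choose_succ_self, Nat.cast_zero, mul_zero, zero_mul, add_zero,
        Nat.choose_zero_right, pow_zero, one_mul, Nat.cast_one, Nat.cast_add] at h6 ⊢
      linarith [h6]
    have split : ∑ m ∈ range (i + 1), -((-1 : ℝ) ^ m * (i.choose m) * P.eval ((m : ℝ) + 1))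
          + (∑ m ∈ range (i + 1), (-1 : ℝ) ^ (m + 1) * (i.choose (m + 1)) * P.eval (((m + 1 : ℕ)) : ℝ)
            + (-1 : ℝ) ^ 0 * ((i + 1).choose 0) * P.eval ((0 : ℕ) : ℝ))
        = ∑ m ∈ range (i + 1), (-1 : ℝ) ^ m * (i.choose m) * ((-Q).eval (m : ℝ)) := by
      rw [rebuild, ← Finset.sum_add_distrib]
      refine Finset.sum_congr rfl (fun m _ => ?_)
      have := hQeval (m : ℝ)
      simp only [Polynomial.eval_neg, this]
      ring
    rw [add_assoc, split, ih (-Q) (le_trans (Polynomial.natDegree_neg Q ▸ hQdeg) (le_refl i))]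
    rw [Polynomial.coeff_neg, hQi]
    push_cast
    rw [Nat.factorial_succ]
    push_cast
    ring

lemma NN (b i k m : ℕ) (hm : m ≤ i) :
    (i + b).descFactorial (i - m) * (k + b + m).factorial
      = (i + b).factorial * (k + b + m).descFactorial k := by
  apply Nat.eq_of_mul_eq_mul_left (Nat.factorial_pos (b + m))
  have h1 : (b + m) = (i + b) - (i - m) := by omega
  have h2 : (b + m) = (k + b + m) - k := by omega
  calc (b + m).factorial * ((i + b).descFactorial (i - m) * (k + b + m).factorial)
      = ((i + b) - (i - m)).factorial * (i + b).descFactorial (i - m) * (k + b + m).factorial := by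
        rw [← h1]; ring
    _ = (i + b).factorial * (k + b + m).factorial :=
        by rw [Nat.factorial_mul_descFactorial (by omega)]
    _ = (i + b).factorial * (((k + b + m) - k).factorial * (k + b + m).descFactorial k) := by
        rw [Nat.factorial_mul_descFactorial (by omega)]
    _ = (b + m).factorial * ((i + b).factorial * (k + b + m).descFactorial k) := by
        rw [← h2]; ring

lemma Peval (b k m : ℕ) :
    ((Polynomial.taylor ((b : ℝ) + 1)) (ascPochhammer ℝ k)).eval (m : ℝ)
      = ((k + b + m).descFactorial k : ℝ) := by
  rw [Polynomial.taylor_eval]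
  rw [show (m : ℝ) + ((b : ℝ) + 1) = ((m + (b + 1) : ℕ) : ℝ) by push_cast; ring]
  rw [← ascPochhammer_eval_cast, ascPochhammer_nat_eq_descFactorial]
  congr 2
  omega

lemma momL (b i k : ℕ) (hk : k ≤ i) :
    ∑ m ∈ range (i + 1), lagCoeff b i m * ((k + b + m).factorial : ℝ)
      = if k = i then (-1 : ℝ) ^ i * ((i + b).factorial : ℝ) else 0 := by
  set P := (Polynomial.taylor ((b : ℝ) + 1)) (ascPochhammer ℝ k) with hP
  have hPdeg : P.natDegree = k := by
    rw [hP, Polynomial.natDegree_taylor, ascPochhammer_natDegree]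
  have hfaci : ((i.factorial : ℝ)) ≠ 0 := Nat.cast_ne_zero.mpr i.factorial_ne_zero
  have step : ∀ m ∈ range (i + 1),
      lagCoeff b i m * ((k + b + m).factorial : ℝ)
        = ((i + b).factorial : ℝ) / (i.factorial : ℝ)
            * ((-1 : ℝ) ^ m * (i.choose m) * P.eval (m : ℝ)) := by
    intro m hm
    have hmi : m ≤ i := by simpa using Nat.lt_succ_iff.mp (Finset.mem_range.mp hm)
    have hNN := NN b i k m hmi
    have hNNr : ((i + b).descFactorial (i - m) : ℝ) * ((k + b + m).factorial : ℝ)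
        = ((i + b).factorial : ℝ) * ((k + b + m).descFactorial k : ℝ) := by
      exact_mod_cast congrArg (Nat.cast : ℕ → ℝ) hNN
    rw [Peval, lagCoeff]
    field_simp
    linear_combination (i.choose m : ℝ) * hNNr
  rw [Finset.sum_congr rfl step, ← Finset.mul_sum, FD i P (hPdeg ▸ hk)]
  by_cases hki : k = i
  · subst hki
    have hmon : P.Monic := by
      rw [hP, Polynomial.taylor_apply]
      exact (monic_ascPochhammer ℝ k).comp_X_add_C _
    have : P.coeff k = 1 := by
      have := hmon.coeff_natDegree
      rwa [hPdeg] at this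
    rw [if_pos rfl, this]
    field_simp
  · have : P.coeff i = 0 :=
      Polynomial.coeff_eq_zero_of_natDegree_lt (by omega)
    rw [if_neg hki, this]
    ring

lemma pow_exp_fun_eq (p : ℕ) :
    (fun x : ℝ => Real.exp (-x) * x ^ ((p : ℝ) + 1 - 1)) = fun x : ℝ => x ^ p * Real.exp (-x) := by
  funext x
  rw [show ((p : ℝ) + 1 - 1) = ((p : ℕ) : ℝ) by ring, Real.rpow_natCast, mul_comm]

lemma integrable_pow_exp (p : ℕ) :
    IntegrableOn (fun t : ℝ => t ^ p * Real.exp (-t)) (Set.Ioi 0) := by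
  have h := Real.GammaIntegral_convergent (s := (p : ℝ) + 1) (by positivity)
  rwa [pow_exp_fun_eq] at h

lemma integral_pow_exp (p : ℕ) :
    ∫ t in Set.Ioi (0 : ℝ), t ^ p * Real.exp (-t) = (p.factorial : ℝ) := by
  have h := Real.Gamma_eq_integral (s := (p : ℝ) + 1) (by positivity)
  rw [Real.Gamma_nat_eq_factorial] at h
  rw [h, pow_exp_fun_eq]

lemma poch_neg_nat (Kn : ℕ) : ∀ j, j ≤ Kn →
    poch (-(Kn : ℝ)) j = (-1 : ℝ) ^ j * (Kn.descFactorial j : ℝ) := by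
  intro j
  induction j with
  | zero => intro _; simp [poch]
  | succ j ih =>
    intro hj
    have hj' : j ≤ Kn := by omega
    have : poch (-(Kn : ℝ)) (j + 1) = poch (-(Kn : ℝ)) j * (-(Kn : ℝ) + j) := by
      rw [poch, poch, Finset.prod_range_succ]
    rw [this, ih hj', Nat.descFactorial_succ]
    have hcast : (-(Kn : ℝ) + j) = -(((Kn - j : ℕ) : ℝ)) := by
      rw [Nat.cast_sub hj']; ring
    rw [hcast]
    push_cast
    ring

lemma alt_sum (n : ℕ) :
    ∑ r ∈ range (n + 1), (-1 : ℝ) ^ r * (n.choose r : ℝ) = if n = 0 then 1 else 0 := by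
  have h := Int.alternating_sum_range_choose (n := n)
  have := congrArg (Int.cast : ℤ → ℝ) h
  push_cast at this
  rw [this]

lemma CS (b Kn m : ℕ) (hm : m ≤ Kn) :
    ∑ j ∈ Icc m Kn, eC b Kn j * lagCoeff b j m = if m = Kn then 1 else 0 := by
  have hIcc : Icc m Kn = Ico m (Kn + 1) := by rw [Finset.Ico_add_one_right_eq_Icc]
  rw [hIcc, Finset.sum_Ico_eq_sum_range]
  have hrange : Kn + 1 - m = (Kn - m) + 1 := by omega
  rw [hrange]
  have term : ∀ r ∈ range ((Kn - m) + 1),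
      eC b Kn (m + r) * lagCoeff b (m + r) m
        = (((Kn + b).factorial : ℝ) / ((b + m).factorial : ℝ) * (Kn.choose m : ℝ))
            * ((-1 : ℝ) ^ r * ((Kn - m).choose r : ℝ)) := by
    intro r hr
    have hrm : r ≤ Kn - m := by simpa using Nat.lt_succ_iff.mp (Finset.mem_range.mp hr)
    have hjK : m + r ≤ Kn := by omega
    have h1 : ((m + r + b).descFactorial r : ℝ) * ((m + b).factorial : ℝ)
        = ((m + r + b).factorial : ℝ) := by
      have := Nat.factorial_mul_descFactorial (n := m + r + b) (k := r) (by omega)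
      have h' : (m + r + b) - r = m + b := by omega
      rw [h'] at this
      exact_mod_cast congrArg (Nat.cast : ℕ → ℝ) (by rw [mul_comm] at this; rw [this])
    have h2 : (Kn.descFactorial (m + r) : ℝ) = ((m + r).factorial : ℝ) * (Kn.choose (m + r) : ℝ) := by
      exact_mod_cast congrArg (Nat.cast : ℕ → ℝ) (Nat.descFactorial_eq_factorial_mul_choose Kn (m + r))
    have h3 : (Kn.choose (m + r) : ℝ) * ((m + r).choose m : ℝ)
        = (Kn.choose m : ℝ) * ((Kn - m).choose r : ℝ) := by
      have := Nat.choose_mul (n := Kn) (k := m + r) (s := m) (by omega)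
      have h' : m + r - m = r := by omega
      rw [h'] at this
      exact_mod_cast congrArg (Nat.cast : ℕ → ℝ) this
    unfold eC lagCoeff
    rw [show m + r - m = r from by omega, h2,
      show b + (m + r) = m + r + b from by omega, show b + m = m + b from by omega]
    have hbmr : ((m + r + b).factorial : ℝ) ≠ 0 := Nat.cast_ne_zero.mpr (Nat.factorial_ne_zero _)
    have hmr : (((m + r).factorial : ℝ)) ≠ 0 := Nat.cast_ne_zero.mpr (Nat.factorial_ne_zero _)
    have hbm : (((m + b).factorial : ℝ)) ≠ 0 := Nat.cast_ne_zero.mpr (Nat.factorial_ne_zero _)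
    have h4 : ((-1 : ℝ)) ^ (m * 2) = 1 := by rw [mul_comm, pow_mul]; norm_num
    rw [pow_add]
    field_simp
    linear_combination
      ((Kn.choose (m + r) : ℝ) * ((m + r).choose m : ℝ) * ((m + r + b).descFactorial r : ℝ)
          * ((m + b).factorial : ℝ)) * h4
        + ((Kn.choose (m + r) : ℝ) * ((m + r).choose m : ℝ)) * h1
        + (((m + r + b).factorial : ℝ)) * h3
  rw [Finset.sum_congr rfl term, ← Finset.mul_sum, alt_sum]
  by_cases hmK : m = Kn
  · subst hmK
    simp only [if_pos rfl, Nat.choose_self, Nat.cast_one, mul_one, Nat.sub_self,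
      if_true, Nat.add_comm]
    first
    | exact div_self (Nat.cast_ne_zero.mpr (Nat.factorial_ne_zero _))
    | (rw [show m + b = b + m from by omega];
       exact div_self (Nat.cast_ne_zero.mpr (Nat.factorial_ne_zero _)))
  · rw [if_neg (by omega), if_neg hmK, mul_zero]

lemma sum_extend (j Kn : ℕ) (hj : j ≤ Kn) (f : ℕ → ℝ) :
    ∑ m ∈ range (Kn + 1), (if m ≤ j then f m else 0) = ∑ m ∈ range (j + 1), f m := by
  rw [← Finset.sum_subset (Finset.range_subset_range.mpr (by omega : j + 1 ≤ Kn + 1))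
    (fun m _ hm => if_neg (by simp at hm ⊢; omega))]
  exact Finset.sum_congr rfl fun m hm => if_pos (by simp at hm; omega)

lemma sum_icc_extend (Nn m Kn : ℕ) (hm : Nn ≤ m) (f : ℕ → ℝ) :
    ∑ j ∈ Icc Nn Kn, (if m ≤ j then f j else 0) = ∑ j ∈ Icc m Kn, f j := by
  rw [← Finset.sum_subset (Finset.Icc_subset_Icc hm le_rfl)
    (fun j hj hjm => if_neg (by simp at hj hjm ⊢; omega))]
  exact Finset.sum_congr rfl fun j hj => if_pos (by simp at hj; omega)

end BioD

/-- With `K = N + Y − 1`, `M > K`, `α = M − K − 1` and the weight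
`w(t) = t^α e^{-t}`, the polynomial
`D_{N-1}(t) = Γ(M) ∑_{j=N-1}^K [(-K)_j / Γ(M−K+j)] L_j^{(α)}(t)` is
(1) a monic polynomial of degree `K` which is a linear combination of `1, t, …, t^{N-2}, t^K`;
(2) orthogonal to the monic Laguerre polynomials `C_j = (-1)^j j! L_j^{(α)}` for `j < N-1`;
(3) and its pairing with `C_{N-1} = (-1)^{N-1}(N-1)! L_{N-1}^{(α)}` is
`h_{N-1} = (-1)^{N-1} Γ(M) (-K)_{N-1}`. -/
theorem biorthogonal_partner_D (N Y : ℕ) (hN : 1 ≤ N) (M : ℤ) (K : ℕ)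
    (hK : K = N + Y - 1) (hM : (K : ℤ) < M) :
    (∃ a : ℕ → ℝ, ∀ t ∈ Set.Ioi (0:ℝ),
        Real.Gamma (M : ℝ) * ∑ j ∈ Finset.Icc (N - 1) K,
            poch (-(K : ℝ)) j / Real.Gamma ((M : ℝ) - K + j) *
              laguerre ((M : ℝ) - K - 1) j t
          = t ^ K + ∑ i ∈ Finset.range (N - 1), a i * t ^ i)
    ∧ (∀ j : ℕ, j < N - 1 →
        (∫ t in Set.Ioi (0:ℝ),
            ((-1 : ℝ) ^ j * (j.factorial : ℝ) * laguerre ((M : ℝ) - K - 1) j t) *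
            (Real.Gamma (M : ℝ) * ∑ i ∈ Finset.Icc (N - 1) K,
                poch (-(K : ℝ)) i / Real.Gamma ((M : ℝ) - K + i) *
                  laguerre ((M : ℝ) - K - 1) i t) *
            (t ^ ((M : ℝ) - K - 1) * Real.exp (-t))) = 0)
    ∧ (∫ t in Set.Ioi (0:ℝ),
          ((-1 : ℝ) ^ (N - 1) * ((N - 1).factorial : ℝ) *
              laguerre ((M : ℝ) - K - 1) (N - 1) t) *
          (Real.Gamma (M : ℝ) * ∑ i ∈ Finset.Icc (N - 1) K,
              poch (-(K : ℝ)) i / Real.Gamma ((M : ℝ) - K + i) *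
                laguerre ((M : ℝ) - K - 1) i t) *
          (t ^ ((M : ℝ) - K - 1) * Real.exp (-t)))
        = (-1 : ℝ) ^ (N - 1) * Real.Gamma (M : ℝ) * poch (-(K : ℝ)) (N - 1) := by
  classical
  obtain ⟨b, hbZ⟩ : ∃ b : ℕ, (b : ℤ) = M - K - 1 :=
    ⟨(M - K - 1).toNat, Int.toNat_of_nonneg (by omega)⟩
  have hMR : (M : ℝ) = (K : ℝ) + b + 1 := by
    have := congrArg (Int.cast : ℤ → ℝ) hbZ
    push_cast at this
    linarith
  have hα : (M : ℝ) - K - 1 = ((b : ℕ) : ℝ) := by rw [hMR]; ring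
  have hNK : N - 1 ≤ K := by omega
  have hΓM : Real.Gamma ((M : ℝ)) = ((K + b).factorial : ℝ) := by
    rw [hMR, show (K : ℝ) + b + 1 = ((K + b : ℕ) : ℝ) + 1 by push_cast; ring,
      Real.Gamma_nat_eq_factorial]
  have hΓj : ∀ j : ℕ, Real.Gamma ((M : ℝ) - (K : ℝ) + (j : ℝ)) = ((b + j).factorial : ℝ) := by
    intro j
    rw [show (M : ℝ) - K + j = ((b + j : ℕ) : ℝ) + 1 by rw [hMR]; push_cast; ring,
      Real.Gamma_nat_eq_factorial]
  have hec : ∀ j, j ≤ K → Real.Gamma (M : ℝ) * (poch (-(K : ℝ)) j / Real.Gamma ((M : ℝ) - K + j))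
      = BioD.eC b K j := by
    intro j hj
    rw [hΓM, hΓj j, BioD.poch_neg_nat K j hj, BioD.eC]
    ring
  set dC : ℕ → ℝ := fun m => ∑ j ∈ Finset.Icc (N - 1) K,
    (if m ≤ j then BioD.eC b K j * BioD.lagCoeff b j m else 0) with hdC
  -- the key rewriting of the D-sum as a polynomial
  have hD : ∀ t : ℝ, t ∈ Set.Ioi (0:ℝ) →
      Real.Gamma (M : ℝ) * ∑ j ∈ Finset.Icc (N - 1) K,
          poch (-(K : ℝ)) j / Real.Gamma ((M : ℝ) - K + j) * laguerre ((M : ℝ) - K - 1) j t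
        = ∑ m ∈ Finset.range (K + 1), dC m * t ^ m := by
    intro t ht
    have ht' : (0:ℝ) < t := ht
    rw [Finset.mul_sum]
    have step1 : ∀ j ∈ Finset.Icc (N - 1) K,
        Real.Gamma (M : ℝ) * (poch (-(K : ℝ)) j / Real.Gamma ((M : ℝ) - K + j)
            * laguerre ((M : ℝ) - K - 1) j t)
          = ∑ m ∈ Finset.range (K + 1),
              (if m ≤ j then BioD.eC b K j * BioD.lagCoeff b j m * t ^ m else 0) := by
      intro j hj
      obtain ⟨hj1, hj2⟩ := Finset.mem_Icc.mp hj
      rw [hα, BioD.laguerre_eval b j t ht', ← mul_assoc, hec j hj2,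
        BioD.sum_extend j K hj2 (fun m => BioD.eC b K j * BioD.lagCoeff b j m * t ^ m),
        Finset.mul_sum]
      exact Finset.sum_congr rfl fun k _ => by ring
    rw [Finset.sum_congr rfl step1, Finset.sum_comm]
    refine Finset.sum_congr rfl fun m _ => ?_
    rw [hdC]
    simp only []
    rw [Finset.sum_mul]
    exact Finset.sum_congr rfl fun j _ => by rw [ite_mul, zero_mul]
  have hdCval : ∀ m, N - 1 ≤ m → m ≤ K → dC m = if m = K then 1 else 0 := by
    intro m hm1 hm2
    rw [hdC]
    simp only []
    rw [BioD.sum_icc_extend (N - 1) m K hm1 (fun j => BioD.eC b K j * BioD.lagCoeff b j m)]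
    exact BioD.CS b K m hm2
  -- the shared integral computation
  have hINT : ∀ j0 : ℕ, j0 ≤ N - 1 →
      (∫ t in Set.Ioi (0:ℝ),
          ((-1 : ℝ) ^ j0 * (j0.factorial : ℝ) * laguerre ((M : ℝ) - K - 1) j0 t) *
          (Real.Gamma (M : ℝ) * ∑ i ∈ Finset.Icc (N - 1) K,
              poch (-(K : ℝ)) i / Real.Gamma ((M : ℝ) - K + i) *
                laguerre ((M : ℝ) - K - 1) i t) *
          (t ^ ((M : ℝ) - K - 1) * Real.exp (-t)))
        = ∑ k ∈ Finset.range (j0 + 1),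
            ((-1 : ℝ) ^ j0 * (j0.factorial : ℝ) * BioD.lagCoeff b j0 k) *
              ∑ j ∈ Finset.Icc (N - 1) K, BioD.eC b K j *
                (if k = j then (-1 : ℝ) ^ j * ((j + b).factorial : ℝ) else 0) := by
    intro j0 hj0
    have hcong : Set.EqOn
        (fun t : ℝ =>
          ((-1 : ℝ) ^ j0 * (j0.factorial : ℝ) * laguerre ((M : ℝ) - K - 1) j0 t) *
          (Real.Gamma (M : ℝ) * ∑ i ∈ Finset.Icc (N - 1) K,
              poch (-(K : ℝ)) i / Real.Gamma ((M : ℝ) - K + i) *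
                laguerre ((M : ℝ) - K - 1) i t) *
          (t ^ ((M : ℝ) - K - 1) * Real.exp (-t)))
        (fun t : ℝ => ∑ k ∈ Finset.range (j0 + 1), ∑ m ∈ Finset.range (K + 1),
          ((-1 : ℝ) ^ j0 * (j0.factorial : ℝ) * BioD.lagCoeff b j0 k * dC m)
            * (t ^ (k + b + m) * Real.exp (-t)))
        (Set.Ioi 0) := by
      intro t ht
      have ht' : (0:ℝ) < t := ht
      simp only [Set.mem_Ioi] at ht
      dsimp only
      rw [hD t ht', hα, Real.rpow_natCast, BioD.laguerre_eval b j0 t ht',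
        Finset.mul_sum (Finset.range (j0 + 1)) (fun k => BioD.lagCoeff b j0 k * t ^ k)
          ((-1 : ℝ) ^ j0 * (j0.factorial : ℝ)),
        Finset.sum_mul_sum, Finset.sum_mul]
      refine Finset.sum_congr rfl fun k _ => ?_
      rw [Finset.sum_mul]
      refine Finset.sum_congr rfl fun m _ => ?_
      rw [pow_add, pow_add]
      ring
    rw [MeasureTheory.setIntegral_congr_fun measurableSet_Ioi hcong]
    rw [MeasureTheory.integral_finset_sum _ (fun k _ => integrable_finset_sum _
      (fun m _ => ((BioD.integrable_pow_exp (k + b + m)).const_mul _)))]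
    refine Finset.sum_congr rfl fun k hk => ?_
    rw [MeasureTheory.integral_finset_sum _
      (fun m _ => ((BioD.integrable_pow_exp (k + b + m)).const_mul _))]
    have hk' : k ≤ N - 1 := by
      have := Finset.mem_range.mp hk; omega
    have hval : ∀ m ∈ Finset.range (K + 1),
        (∫ t in Set.Ioi (0:ℝ),
            ((-1 : ℝ) ^ j0 * (j0.factorial : ℝ) * BioD.lagCoeff b j0 k * dC m)
              * (t ^ (k + b + m) * Real.exp (-t)))
          = ((-1 : ℝ) ^ j0 * (j0.factorial : ℝ) * BioD.lagCoeff b j0 k)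
              * (dC m * ((k + b + m).factorial : ℝ)) := by
      intro m _
      rw [MeasureTheory.integral_const_mul, BioD.integral_pow_exp]
      ring
    rw [Finset.sum_congr rfl hval, ← Finset.mul_sum]
    congr 1
    -- now the moment computation
    calc ∑ m ∈ Finset.range (K + 1), dC m * ((k + b + m).factorial : ℝ)
        = ∑ m ∈ Finset.range (K + 1), ∑ j ∈ Finset.Icc (N - 1) K,
            (if m ≤ j then BioD.eC b K j * BioD.lagCoeff b j m * ((k + b + m).factorial : ℝ)
              else 0) := by
          refine Finset.sum_congr rfl fun m _ => ?_
          rw [hdC]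
          rw [Finset.sum_mul]
          exact Finset.sum_congr rfl fun j _ => by rw [ite_mul, zero_mul]
      _ = ∑ j ∈ Finset.Icc (N - 1) K, ∑ m ∈ Finset.range (K + 1),
            (if m ≤ j then BioD.eC b K j * BioD.lagCoeff b j m * ((k + b + m).factorial : ℝ)
              else 0) := Finset.sum_comm
      _ = ∑ j ∈ Finset.Icc (N - 1) K, BioD.eC b K j *
            (if k = j then (-1 : ℝ) ^ j * ((j + b).factorial : ℝ) else 0) := by
          refine Finset.sum_congr rfl fun j hj => ?_
          obtain ⟨hj1, hj2⟩ := Finset.mem_Icc.mp hj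
          rw [BioD.sum_extend j K hj2
            (fun m => BioD.eC b K j * BioD.lagCoeff b j m * ((k + b + m).factorial : ℝ))]
          rw [show (∑ m ∈ Finset.range (j + 1),
                BioD.eC b K j * BioD.lagCoeff b j m * ((k + b + m).factorial : ℝ))
              = BioD.eC b K j * ∑ m ∈ Finset.range (j + 1),
                  BioD.lagCoeff b j m * ((k + b + m).factorial : ℝ) from by
            rw [Finset.mul_sum]
            exact Finset.sum_congr rfl fun m _ => by ring]
          rw [BioD.momL b j k (le_trans hk' hj1)]
  refine ⟨⟨dC, ?_⟩, ?_, ?_⟩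
  · -- Part 1
    intro t ht
    have ht' : (0:ℝ) < t := ht
    rw [hD t ht, Finset.sum_range_succ]
    have h1 : dC K = 1 := by rw [hdCval K hNK le_rfl, if_pos rfl]
    have h2 : ∑ m ∈ Finset.range K, dC m * t ^ m
        = ∑ i ∈ Finset.range (N - 1), dC i * t ^ i := by
      symm
      apply Finset.sum_subset (Finset.range_subset_range.mpr (by omega))
      intro m hm hnm
      have hm1 : N - 1 ≤ m := by simp only [Finset.mem_range] at hnm; omega
      have hm2 : m < K := Finset.mem_range.mp hm
      rw [hdCval m hm1 (by omega), if_neg (by omega), zero_mul]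
    rw [h1, h2, one_mul, add_comm]
  · -- Part 2
    intro j hj
    rw [hINT j (by omega)]
    refine Finset.sum_eq_zero fun k hk => ?_
    have hk' : k ≤ j := by have := Finset.mem_range.mp hk; omega
    have hz : (∑ j' ∈ Finset.Icc (N - 1) K, BioD.eC b K j' *
        (if k = j' then (-1 : ℝ) ^ j' * ((j' + b).factorial : ℝ) else 0)) = 0 := by
      refine Finset.sum_eq_zero fun j' hj' => ?_
      obtain ⟨h1, h2⟩ := Finset.mem_Icc.mp hj'
      rw [if_neg (by omega), mul_zero]
    rw [hz, mul_zero]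
  · -- Part 3
    rw [hINT (N - 1) le_rfl]
    have hinner : ∀ k ∈ Finset.range (N - 1 + 1),
        (((-1 : ℝ) ^ (N - 1) * ((N - 1).factorial : ℝ) * BioD.lagCoeff b (N - 1) k) *
          ∑ j ∈ Finset.Icc (N - 1) K, BioD.eC b K j *
            (if k = j then (-1 : ℝ) ^ j * ((j + b).factorial : ℝ) else 0))
          = ((-1 : ℝ) ^ (N - 1) * ((N - 1).factorial : ℝ) * BioD.lagCoeff b (N - 1) k) *
            (if k = N - 1 then BioD.eC b K (N - 1) *
              ((-1 : ℝ) ^ (N - 1) * (((N - 1) + b).factorial : ℝ)) else 0) := by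
      intro k hk
      have hk' : k ≤ N - 1 := by have := Finset.mem_range.mp hk; omega
      congr 1
      rw [Finset.sum_eq_single_of_mem (N - 1) (Finset.mem_Icc.mpr ⟨le_rfl, hNK⟩)
        (fun j' hj' hne => ?_)]
      · by_cases hkN : k = N - 1
        · rw [if_pos hkN, if_pos hkN]
        · rw [if_neg hkN, if_neg hkN, mul_zero]
      · obtain ⟨h1, h2⟩ := Finset.mem_Icc.mp hj'
        rw [if_neg (by omega), mul_zero]
    rw [Finset.sum_congr rfl hinner]
    rw [Finset.sum_eq_single_of_mem (N - 1) (Finset.mem_range.mpr (by omega))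
      (fun k _ hne => by rw [if_neg hne, mul_zero])]
    rw [if_pos rfl]
    rw [hΓM, BioD.poch_neg_nat K (N - 1) hNK]
    unfold BioD.eC BioD.lagCoeff
    rw [Nat.sub_self, Nat.choose_self, Nat.descFactorial_zero]
    have hs : ((-1 : ℝ)) ^ (N - 1) * ((-1 : ℝ)) ^ (N - 1) = 1 := by
      rw [← pow_add]; exact Even.neg_one_pow ⟨N - 1, by ring⟩
    have hfb : (((b + (N - 1)).factorial : ℝ)) ≠ 0 := Nat.cast_ne_zero.mpr (Nat.factorial_ne_zero _)
    have hfN : ((((N - 1)).factorial : ℝ)) ≠ 0 := Nat.cast_ne_zero.mpr (Nat.factorial_ne_zero _)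
    rw [show (N - 1) + b = b + (N - 1) from by omega]
    have hs2 : ((-1 : ℝ)) ^ ((N - 1) * 2) = 1 := by rw [mul_comm, pow_mul]; norm_num
    field_simp
    linear_combination
      (((K.descFactorial (N - 1)) : ℝ)) * hs2
end
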